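/- arXiv:2308.05519 — 3 statements merged into one kernel-verified Lean document; each statement's English description precedes it below -/
import Mathlib

section
/- For every integer N ≥ 2 and every a ≥ 0, (1/√2) · Σ_{k=0}^{N-2} ((2k-1)!!/(2k)!!) · P(k + 1/2, N a²) = √(2/π) · ( a √N · Γ(N-1, N a²) + γ(N - 1/2, N a²) ) / (N-2)!. -/
open MeasureTheory Real Filter

/-- The lower incomplete gamma function `γ(n,x) = ∫₀^x t^(n-1) e^(-t) dt`. -/
noncomputable def lowGamma (n x : ℝ) : ℝ := ∫ t in (0:ℝ)..x, t ^ (n - 1) * Real.exp (-t)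

/-- The upper incomplete gamma function `Γ(n,x) = ∫ₓ^∞ t^(n-1) e^(-t) dt`. -/
noncomputable def upGamma (n x : ℝ) : ℝ := ∫ t in Set.Ioi x, t ^ (n - 1) * Real.exp (-t)

/-- The regularized lower incomplete gamma function `P(n,x) = γ(n,x)/Γ(n)`. -/
noncomputable def regP (n x : ℝ) : ℝ := (Real.Gamma n)⁻¹ * lowGamma n x

lemma intInt (s : ℝ) (hs : 0 < s) (x : ℝ) :
    IntervalIntegrable (fun t => t ^ (s - 1) * Real.exp (-t)) volume 0 x :=
  (intervalIntegral.intervalIntegrable_rpow' (by linarith)).mul_continuousOn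
    (Continuous.continuousOn (by continuity))

lemma lowGamma_succ (s : ℝ) (hs : 0 < s) (x : ℝ) (hx : 0 ≤ x) :
    lowGamma (s + 1) x = s * lowGamma s x - x ^ s * Real.exp (-x) := by
  have key : (∫ t in (0:ℝ)..x, (t ^ s * Real.exp (-t) - s * (t ^ (s-1) * Real.exp (-t))))
      = -(x ^ s * Real.exp (-x)) - -(0 ^ s * Real.exp (-0)) := by
    apply intervalIntegral.integral_eq_sub_of_hasDerivAt_of_le hx
    · apply ContinuousOn.neg
      apply ContinuousOn.mul _ (Continuous.continuousOn (by continuity))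
      intro t ht
      exact (Real.continuousAt_rpow_const t s (by right; positivity)).continuousWithinAt
    · intro t ht
      have h1 : HasDerivAt (fun t : ℝ => t ^ s) (s * t ^ (s-1)) t :=
        Real.hasDerivAt_rpow_const (Or.inl (ne_of_gt ht.1))
      have h2 : HasDerivAt (fun t : ℝ => Real.exp (-t)) (-Real.exp (-t)) t := by
        exact ((Real.hasDerivAt_exp (-t)).comp t (hasDerivAt_neg t)).congr_deriv (by ring)
      have := (h1.mul h2).neg
      convert this using 1
      · rfl
      ring
    · apply IntervalIntegrable.sub
      · have := intInt (s+1) (by linarith) x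
        simpa using this
      · exact (intInt s hs x).const_mul s
  have hsplit : (∫ t in (0:ℝ)..x, (t ^ s * Real.exp (-t) - s * (t ^ (s-1) * Real.exp (-t))))
      = lowGamma (s+1) x - s * lowGamma s x := by
    rw [intervalIntegral.integral_sub, intervalIntegral.integral_const_mul]
    · unfold lowGamma
      simp [add_sub_cancel_right]
    · have := intInt (s+1) (by linarith) x
      simpa using this
    · exact (intInt s hs x).const_mul s
  rw [hsplit] at key
  rw [Real.zero_rpow (ne_of_gt hs)] at key
  linarith [key]

lemma low_add_up (s : ℝ) (hs : 0 < s) (x : ℝ) (hx : 0 ≤ x) :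
    lowGamma s x + upGamma s x = Real.Gamma s := by
  have hint : IntegrableOn (fun t => t ^ (s-1) * Real.exp (-t)) (Set.Ioi 0) volume := by
    have := Real.GammaIntegral_convergent hs
    exact this.congr_fun (fun t _ => mul_comm _ _) measurableSet_Ioi
  have hg : Real.Gamma s = ∫ t in Set.Ioi (0:ℝ), t ^ (s-1) * Real.exp (-t) := by
    rw [Real.Gamma_eq_integral hs]
    exact setIntegral_congr_fun measurableSet_Ioi (fun t _ => mul_comm _ _)
  rw [hg, ← Set.Ioc_union_Ioi_eq_Ioi hx,
    setIntegral_union (Set.Ioc_disjoint_Ioi le_rfl) measurableSet_Ioi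
      (hint.mono_set (by rw [← Set.Ioc_union_Ioi_eq_Ioi hx]; exact Set.subset_union_left))
      (hint.mono_set (by rw [← Set.Ioc_union_Ioi_eq_Ioi hx]; exact Set.subset_union_right))]
  unfold lowGamma upGamma
  rw [intervalIntegral.integral_of_le hx]

lemma upGamma_succ (s : ℝ) (hs : 0 < s) (x : ℝ) (hx : 0 ≤ x) :
    upGamma (s + 1) x = s * upGamma s x + x ^ s * Real.exp (-x) := by
  have h1 := low_add_up s hs x hx
  have h2 := low_add_up (s+1) (by linarith) x hx
  have h3 := lowGamma_succ s hs x hx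
  have h4 : Real.Gamma (s+1) = s * Real.Gamma s := Real.Gamma_add_one (ne_of_gt hs)
  nlinarith [h1, h2, h3, h4]

lemma upGamma_one (x : ℝ) : upGamma 1 x = Real.exp (-x) := by
  unfold upGamma
  simp [Real.rpow_zero, integral_exp_neg_Ioi, integral_exp_Iic]

lemma Gamma_half (n : ℕ) :
    Real.Gamma (n + 1/2) = (Nat.factorial (2*n) : ℝ) / (4^n * Nat.factorial n) * Real.sqrt π := by
  induction n with
  | zero =>
    norm_num
    exact Real.Gamma_one_half_eq
  | succ n ih =>
    have h : ((n:ℝ) + 1) + 1/2 = ((n:ℝ) + 1/2) + 1 := by ring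
    rw [Nat.cast_add, Nat.cast_one, h, Real.Gamma_add_one (by positivity), ih]
    have : (Nat.factorial (2*(n+1)) : ℝ) = (2*n+2) * (2*n+1) * Nat.factorial (2*n) := by
      have : 2*(n+1) = (2*n+1) + 1 := by ring
      rw [this, Nat.factorial_succ, Nat.factorial_succ]
      push_cast; ring
    rw [this]
    have hn : (Nat.factorial (n+1) : ℝ) = (n+1) * Nat.factorial n := by
      rw [Nat.factorial_succ]; push_cast; ring
    rw [hn]
    have h4 : (4:ℝ)^(n+1) = 4 * 4^n := by ring
    rw [h4]
    field_simp
    ring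

lemma coeff_eq (n : ℕ) (hn : 1 ≤ n) :
    (1 / Real.sqrt 2) * ((Nat.doubleFactorial (2*n - 1) : ℝ) / (Nat.doubleFactorial (2*n)))
      * (Real.Gamma (n + 1/2))⁻¹ = Real.sqrt (2/π) / (2 * Nat.factorial n) := by
  have hdfn : Nat.factorial (2*n) = Nat.doubleFactorial (2*n) * Nat.doubleFactorial (2*n-1) := by
    have h : 2*n = (2*n - 1) + 1 := by omega
    conv_lhs => rw [h]
    rw [Nat.factorial_eq_mul_doubleFactorial, ← h]
  have hdf : (Nat.factorial (2*n) : ℝ) = Nat.doubleFactorial (2*n) * Nat.doubleFactorial (2*n-1) := by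
    exact_mod_cast congrArg Nat.cast hdfn
  have h2m : (Nat.doubleFactorial (2*n) : ℝ) = 2^n * Nat.factorial n := by
    rw [Nat.doubleFactorial_two_mul]; push_cast; ring
  rw [Gamma_half]
  have hπ : (0:ℝ) < π := Real.pi_pos
  have hs2 : Real.sqrt (2/π) = Real.sqrt 2 / Real.sqrt π := Real.sqrt_div (by norm_num) π
  rw [hs2, hdf, h2m] at *
  have hsd2 : Real.sqrt 2 * Real.sqrt 2 = 2 := Real.mul_self_sqrt (by norm_num)
  have hsπ : (0:ℝ) < Real.sqrt π := Real.sqrt_pos.mpr hπ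
  have hs2p : (0:ℝ) < Real.sqrt 2 := Real.sqrt_pos.mpr (by norm_num)
  have hd1 : (0:ℝ) < (Nat.doubleFactorial (2*n-1) : ℝ) := by
    exact_mod_cast Nat.doubleFactorial_pos _
  have hf : (0:ℝ) < (Nat.factorial n : ℝ) := by exact_mod_cast Nat.factorial_pos n
  have h4 : (4:ℝ)^n = 2^n * 2^n := by rw [← mul_pow]; norm_num
  rw [hdf, h2m] at *
  field_simp
  rw [h4]
  ring_nf
  rw [show Real.sqrt 2 ^ 2 = 2 from by rw [sq, hsd2]]
  ring


lemma lowGamma_zero (n : ℝ) : lowGamma n 0 = 0 := intervalIntegral.integral_same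

lemma key (m : ℕ) (x : ℝ) (hx : 0 < x) :
    (1 / Real.sqrt 2) * ∑ k ∈ Finset.range (m+1),
        (Nat.doubleFactorial (2*k - 1) : ℝ) / (Nat.doubleFactorial (2*k) : ℝ)
          * regP (k + 1/2) x
      = Real.sqrt (2/π) * (Real.sqrt x * upGamma ((m:ℝ) + 1) x + lowGamma ((m:ℝ) + 3/2) x)
          / Nat.factorial m := by
  have hπ : (0:ℝ) < π := Real.pi_pos
  have hs2 : Real.sqrt (2/π) = Real.sqrt 2 / Real.sqrt π := Real.sqrt_div (by norm_num) π
  have hsd2 : Real.sqrt 2 * Real.sqrt 2 = 2 := Real.mul_self_sqrt (by norm_num)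
  have hsπ : (0:ℝ) < Real.sqrt π := Real.sqrt_pos.mpr hπ
  have hs2p : (0:ℝ) < Real.sqrt 2 := Real.sqrt_pos.mpr (by norm_num)
  induction m with
  | zero =>
    simp only [Finset.range_one, Finset.sum_singleton, Nat.cast_zero, Nat.factorial_zero,
      Nat.cast_one, mul_zero, Nat.doubleFactorial, zero_add]
    norm_num
    rw [upGamma_one]
    have h32 : ((3:ℝ)/2) = 1/2 + 1 := by norm_num
    rw [h32, lowGamma_succ (1/2) (by norm_num) x hx.le]
    rw [show x ^ ((1:ℝ)/2) = Real.sqrt x from (Real.sqrt_eq_rpow x).symm]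
    unfold regP
    rw [Real.Gamma_one_half_eq]
    field_simp
    ring_nf
    rw [sq, hsd2]
  | succ m ih =>
    rw [Finset.sum_range_succ, mul_add, ih]
    have hup : upGamma (((m:ℝ) + 1) + 1) x
        = ((m:ℝ)+1) * upGamma ((m:ℝ)+1) x + x ^ ((m:ℝ)+1) * Real.exp (-x) :=
      upGamma_succ ((m:ℝ)+1) (by positivity) x hx.le
    have hlow : lowGamma (((m:ℝ) + 3/2) + 1) x
        = ((m:ℝ)+3/2) * lowGamma ((m:ℝ)+3/2) x - x ^ ((m:ℝ)+3/2) * Real.exp (-x) :=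
      lowGamma_succ ((m:ℝ)+3/2) (by positivity) x hx.le
    have hc1 : ((m+1:ℕ):ℝ) + 1 = ((m:ℝ) + 1) + 1 := by push_cast; ring
    have hc2 : ((m+1:ℕ):ℝ) + 3/2 = ((m:ℝ) + 3/2) + 1 := by push_cast; ring
    rw [hc1, hc2, hup, hlow]
    have hterm : (1 / Real.sqrt 2)
        * ((Nat.doubleFactorial (2*(m+1) - 1) : ℝ) / (Nat.doubleFactorial (2*(m+1)) : ℝ)
          * regP ((m+1:ℕ) + 1/2) x)
        = Real.sqrt (2/π) / (2 * Nat.factorial (m+1)) * lowGamma ((m:ℝ) + 3/2) x := by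
      unfold regP
      have hco := coeff_eq (m+1) (by omega)
      have harg : ((m+1:ℕ):ℝ) + 1/2 = (m:ℝ) + 3/2 := by push_cast; ring
      rw [harg] at hco ⊢
      calc (1 / Real.sqrt 2)
          * ((Nat.doubleFactorial (2*(m+1) - 1) : ℝ) / (Nat.doubleFactorial (2*(m+1)) : ℝ)
            * ((Real.Gamma ((m:ℝ) + 3/2))⁻¹ * lowGamma ((m:ℝ) + 3/2) x))
          = ((1 / Real.sqrt 2)
            * ((Nat.doubleFactorial (2*(m+1) - 1) : ℝ) / (Nat.doubleFactorial (2*(m+1)) : ℝ))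
            * (Real.Gamma ((m:ℝ) + 3/2))⁻¹) * lowGamma ((m:ℝ) + 3/2) x := by ring
        _ = Real.sqrt (2/π) / (2 * Nat.factorial (m+1)) * lowGamma ((m:ℝ) + 3/2) x := by
            rw [hco]
    rw [hterm]
    have hpow : Real.sqrt x * (x ^ ((m:ℝ)+1) * Real.exp (-x))
        = x ^ ((m:ℝ)+3/2) * Real.exp (-x) := by
      rw [Real.sqrt_eq_rpow, ← mul_assoc, ← Real.rpow_add hx]
      congr 1
      ring
    have hfac : (Nat.factorial (m+1) : ℝ) = ((m:ℝ)+1) * Nat.factorial m := by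
      rw [Nat.factorial_succ]; push_cast; ring
    have hfm : (0:ℝ) < (Nat.factorial m : ℝ) := by exact_mod_cast Nat.factorial_pos m
    rw [hfac, ← hpow]
    have hfm' : (Nat.factorial m : ℝ) ≠ 0 := ne_of_gt hfm
    have hm1 : ((m:ℝ)+1) ≠ 0 := by positivity
    field_simp
    ring

theorem doubleFactorial_sum_eq_incompleteGamma (N : ℕ) (hN : 2 ≤ N) (a : ℝ) (ha : 0 ≤ a) :
    (1 / Real.sqrt 2) * ∑ k ∈ Finset.range (N - 1),
        (Nat.doubleFactorial (2 * k - 1) : ℝ) / (Nat.doubleFactorial (2 * k) : ℝ)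
          * regP (k + 1 / 2) (N * a ^ 2)
      = Real.sqrt (2 / π)
          * (a * Real.sqrt N * upGamma (N - 1) (N * a ^ 2) + lowGamma (N - 1 / 2) (N * a ^ 2))
          / Nat.factorial (N - 2) := by
  obtain ⟨m, rfl⟩ : ∃ m, N = m + 2 := ⟨N - 2, by omega⟩
  have h1 : (m + 2) - 1 = m + 1 := by omega
  have h2 : (m + 2) - 2 = m := by omega
  have hc1 : ((m+2:ℕ):ℝ) - 1 = (m:ℝ) + 1 := by push_cast; ring
  have hc2 : ((m+2:ℕ):ℝ) - 1/2 = (m:ℝ) + 3/2 := by push_cast; ring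
  rw [h1, h2, hc1, hc2]
  rcases eq_or_lt_of_le ha with rfl | hapos
  · simp only [ne_eq, OfNat.ofNat_ne_zero, not_false_eq_true, zero_pow, mul_zero]
    have hz : ∀ n : ℝ, regP n 0 = 0 := fun n => by
      unfold regP; rw [lowGamma_zero, mul_zero]
    simp [hz, lowGamma_zero]
  · have hx : (0:ℝ) < ((m+2:ℕ):ℝ) * a ^ 2 := by positivity
    rw [key m _ hx]
    have : Real.sqrt (((m+2:ℕ):ℝ) * a ^ 2) = a * Real.sqrt ((m+2:ℕ):ℝ) := by
      rw [Real.sqrt_mul (by positivity), Real.sqrt_sq ha]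
      ring
    rw [this]
end

section
/- lim_{N→∞} ( N - Σ_{k=0}^{N-1} P(k+1, N) ) / √N = 1/√(2π). (This gives the expected number of eigenvalues of the complex Ginibre ensemble lying outside the limiting support, to leading order √(N/(2π)).) -/
open MeasureTheory Real Filter

lemma aux_hasDerivAt (k : ℕ) (t : ℝ) :
    HasDerivAt (fun t : ℝ => -(Real.exp (-t) *
        ∑ j ∈ Finset.range (k + 1), ((k.factorial : ℝ) / j.factorial) * t ^ j))
      (t ^ k * Real.exp (-t)) t := by
  have hexp : HasDerivAt (fun t : ℝ => Real.exp (-t)) (-Real.exp (-t)) t := by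
    simpa using (hasDerivAt_neg t).exp
  have hsum : HasDerivAt
      (fun t : ℝ => ∑ j ∈ Finset.range (k + 1), ((k.factorial : ℝ) / j.factorial) * t ^ j)
      (∑ j ∈ Finset.range (k + 1), ((k.factorial : ℝ) / j.factorial) * ((j : ℝ) * t ^ (j - 1))) t :=
    HasDerivAt.fun_sum fun j _ => (hasDerivAt_pow j t).const_mul _
  have key : (∑ j ∈ Finset.range (k + 1), ((k.factorial : ℝ) / j.factorial) * ((j : ℝ) * t ^ (j - 1)))
      = ∑ j ∈ Finset.range k, ((k.factorial : ℝ) / j.factorial) * t ^ j := by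
    rw [Finset.sum_range_succ']
    simp only [Nat.cast_zero, zero_mul, mul_zero, add_zero]
    refine Finset.sum_congr rfl fun j _ => ?_
    have hfact : (((j + 1).factorial : ℝ)) = ((j : ℝ) + 1) * j.factorial := by
      exact_mod_cast Nat.factorial_succ j
    have h1 : ((j : ℝ) + 1) ≠ 0 := by positivity
    have h2 : (j.factorial : ℝ) ≠ 0 := (Nat.cast_pos.mpr j.factorial_pos).ne'
    rw [Nat.add_sub_cancel, hfact]
    push_cast
    field_simp
  have h := (hexp.fun_mul hsum).fun_neg
  refine h.congr_deriv ?_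
  rw [key, Finset.sum_range_succ,
    div_self ((Nat.cast_pos.mpr k.factorial_pos).ne' : (k.factorial : ℝ) ≠ 0)]
  ring

lemma integral_pow_mul_exp (k : ℕ) (x : ℝ) :
    (∫ t in (0:ℝ)..x, t ^ k * Real.exp (-t))
      = (k.factorial : ℝ) * (1 - Real.exp (-x) * ∑ j ∈ Finset.range (k + 1), x ^ j / j.factorial) := by
  have hint : IntervalIntegrable (fun t : ℝ => t ^ k * Real.exp (-t)) volume 0 x := by
    apply Continuous.intervalIntegrable
    fun_prop
  rw [intervalIntegral.integral_eq_sub_of_hasDerivAt (fun t _ => aux_hasDerivAt k t) hint]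
  simp only [neg_zero, Real.exp_zero, one_mul]
  have h0 : (∑ j ∈ Finset.range (k + 1), ((k.factorial : ℝ) / j.factorial) * (0:ℝ) ^ j)
      = (k.factorial : ℝ) := by
    rw [Finset.sum_eq_single 0]
    · simp
    · intro j _ hj
      simp [zero_pow hj]
    · simp
  have hsum2 : Real.exp (-x) * ∑ j ∈ Finset.range (k + 1), ((k.factorial : ℝ) / j.factorial) * x ^ j
      = (k.factorial : ℝ) * (Real.exp (-x) * ∑ j ∈ Finset.range (k + 1), x ^ j / j.factorial) := by
    rw [Finset.mul_sum, Finset.mul_sum, Finset.mul_sum]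
    exact Finset.sum_congr rfl fun j _ => by ring
  rw [h0, hsum2]
  ring

lemma regP_nat (k : ℕ) (x : ℝ) :
    regP ((k : ℝ) + 1) x
      = 1 - Real.exp (-x) * ∑ j ∈ Finset.range (k + 1), x ^ j / j.factorial := by
  rw [regP, lowGamma]
  have h1 : ((k : ℝ) + 1 - 1) = (k : ℝ) := by ring
  have h2 : (∫ t in (0:ℝ)..x, t ^ ((k : ℝ) + 1 - 1) * Real.exp (-t))
      = ∫ t in (0:ℝ)..x, t ^ k * Real.exp (-t) := by
    simp only [h1, Real.rpow_natCast]
  rw [h2, integral_pow_mul_exp, Real.Gamma_nat_eq_factorial, ← mul_assoc,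
    inv_mul_cancel₀ ((Nat.cast_pos.mpr k.factorial_pos).ne' : (k.factorial : ℝ) ≠ 0), one_mul]

lemma sumsum (x : ℝ) (n : ℕ) :
    ∑ k ∈ Finset.range n, ∑ j ∈ Finset.range (k + 1), x ^ j / (j.factorial : ℝ)
      = ∑ j ∈ Finset.range n, ((n : ℝ) - j) * (x ^ j / j.factorial) := by
  induction n with
  | zero => simp
  | succ n ih =>
    rw [Finset.sum_range_succ, ih]
    have h : ∑ j ∈ Finset.range (n + 1), (((n : ℕ) + 1 : ℝ) - j) * (x ^ j / j.factorial)
        = ∑ j ∈ Finset.range (n + 1),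
            (((n : ℝ) - j) * (x ^ j / j.factorial) + x ^ j / j.factorial) :=
      Finset.sum_congr rfl fun j _ => by ring
    push_cast
    rw [h, Finset.sum_add_distrib]
    congr 1
    rw [Finset.sum_range_succ]
    simp

lemma telescope (x : ℝ) (n : ℕ) :
    ∑ j ∈ Finset.range n, ((x : ℝ) - j) * (x ^ j / j.factorial)
      = x ^ n * n / n.factorial := by
  induction n with
  | zero => simp
  | succ n ih =>
    rw [Finset.sum_range_succ, ih]
    have h2 : (n.factorial : ℝ) ≠ 0 := (Nat.cast_pos.mpr n.factorial_pos).ne'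
    have hfact : (((n + 1).factorial : ℝ)) = ((n : ℝ) + 1) * n.factorial := by
      exact_mod_cast Nat.factorial_succ n
    rw [hfact]
    push_cast
    field_simp
    ring

theorem expected_number_outside_GinUE :
    Tendsto (fun N : ℕ => ((N : ℝ) - ∑ k ∈ Finset.range N, regP (k + 1) N) / Real.sqrt N)
      atTop (nhds (1 / Real.sqrt (2 * π))) := by
  have hπ : (1 : ℝ) / Real.sqrt (2 * π) = (Real.sqrt π * Real.sqrt 2)⁻¹ := by
    rw [one_div, Real.sqrt_mul (by norm_num : (0:ℝ) ≤ 2), mul_comm]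
  rw [hπ]
  have hlim : Tendsto (fun N : ℕ => (Stirling.stirlingSeq N * Real.sqrt 2)⁻¹) atTop
      (nhds ((Real.sqrt π * Real.sqrt 2)⁻¹)) := by
    apply Tendsto.inv₀ (Stirling.tendsto_stirlingSeq_sqrt_pi.mul_const _)
    positivity
  apply Tendsto.congr' _ hlim
  filter_upwards [eventually_ge_atTop 1] with N hN1
  have hNpos : (0 : ℝ) < N := by exact_mod_cast hN1
  have hclosed : ((N : ℝ) - ∑ k ∈ Finset.range N, regP ((k : ℝ) + 1) N)
      = Real.exp (-(N:ℝ)) * ((N:ℝ) ^ N * N / N.factorial) := by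
    have h1 : ∀ k ∈ Finset.range N, regP ((k : ℝ) + 1) (N : ℝ)
        = 1 - Real.exp (-(N:ℝ)) * ∑ j ∈ Finset.range (k + 1), (N:ℝ) ^ j / j.factorial :=
      fun k _ => regP_nat k N
    rw [Finset.sum_congr rfl h1, Finset.sum_sub_distrib]
    simp only [Finset.sum_const, Finset.card_range, nsmul_eq_mul, mul_one]
    rw [← Finset.mul_sum, sumsum, telescope]
    ring
  rw [hclosed, Stirling.stirlingSeq]
  have hsqN : Real.sqrt ((N:ℝ)) * Real.sqrt ((N:ℝ)) = (N:ℝ) := Real.mul_self_sqrt hNpos.le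
  have hsq2N : Real.sqrt (2 * (N:ℝ)) = Real.sqrt 2 * Real.sqrt (N:ℝ) :=
    Real.sqrt_mul (by norm_num) _
  have hexpN : Real.exp (-(N:ℝ)) * (Real.exp 1) ^ N = 1 := by
    rw [← Real.exp_nat_mul, ← Real.exp_add]
    norm_num
  have hfac : (N.factorial : ℝ) ≠ 0 := (Nat.cast_pos.mpr N.factorial_pos).ne'
  have hsN : Real.sqrt (N:ℝ) ≠ 0 := by positivity
  have he : (Real.exp 1 : ℝ) ≠ 0 := (Real.exp_pos 1).ne'
  rw [hsq2N, div_pow]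
  field_simp
  have hE : Real.exp (-(N:ℝ)) * Real.exp ((N:ℝ)) = 1 := by
    rw [← Real.exp_add]; simp
  linear_combination hsqN - (N:ℝ) * hexpN
end

section
/- For every R ≥ 0, √(2/π) · ∫_{{(x,y) ∈ ℝ² : x² + y² ≤ R²}} |y| · erfc(√2 |y|) · e^{2y²} dx dy = R² - √(2/π) · R + 1/2 - (1/2) e^{2R²} erfc(√2 · R). (The integrand, up to the constant, is the limiting density of complex eigenvalues of the real Ginibre ensemble at the origin, and the identity evaluates the expected number of complex eigenvalues in the disc of radius R.) -/
open MeasureTheory Real Filter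

/-- The error function `erf(x) = (2/√π) ∫₀^x e^(-t²) dt`. -/
noncomputable def erf (x : ℝ) : ℝ := (2 / Real.sqrt π) * ∫ t in (0:ℝ)..x, Real.exp (-t ^ 2)

/-- The complementary error function `erfc(x) = 1 - erf(x)`. -/
noncomputable def erfc (x : ℝ) : ℝ := 1 - erf x

lemma gauss_ii (a b : ℝ) : IntervalIntegrable (fun t : ℝ => Real.exp (-t^2)) volume a b :=
  (Real.continuous_exp.comp (by continuity)).intervalIntegrable a b

lemma erf_hasDerivAt (x : ℝ) : HasDerivAt erf (2 / Real.sqrt π * Real.exp (-x^2)) x := by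
  have h := (intervalIntegral.integral_hasDerivAt_right (gauss_ii 0 x)
    ((Real.continuous_exp.comp (by continuity)).stronglyMeasurableAtFilter _ _)
    (Real.continuous_exp.comp (by continuity)).continuousAt)
  exact h.const_mul (2 / Real.sqrt π)

lemma erf_continuous : Continuous erf := by
  unfold erf
  exact continuous_const.mul (intervalIntegral.continuous_primitive gauss_ii 0)

lemma erfc_continuous : Continuous erfc := continuous_const.sub erf_continuous

lemma erf_zero : erf 0 = 0 := by simp [erf]

lemma erfc_zero : erfc 0 = 1 := by simp [erfc, erf_zero]

lemma erf_sqrt_two (x : ℝ) :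
    erf (Real.sqrt 2 * x) = (2 * Real.sqrt 2 / Real.sqrt π) * ∫ u in (0:ℝ)..x, Real.exp (-(2*u^2)) := by
  have h2 : (Real.sqrt 2 : ℝ) ≠ 0 := by positivity
  have h := intervalIntegral.smul_integral_comp_mul_left (f := fun t => Real.exp (-t^2))
    (a := 0) (b := x) (Real.sqrt 2)
  rw [mul_zero] at h
  rw [erf, ← h, smul_eq_mul]
  have : ∀ u : ℝ, Real.exp (-(Real.sqrt 2 * u)^2) = Real.exp (-(2*u^2)) := by
    intro u
    rw [mul_pow, Real.sq_sqrt (by norm_num : (2:ℝ) ≥ 0)]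
  simp_rw [this]
  ring

lemma erfc_hasDerivAt (x : ℝ) : HasDerivAt erfc (-(2 / Real.sqrt π * Real.exp (-x^2))) x := by
  exact ((hasDerivAt_const x (1:ℝ)).sub (erf_hasDerivAt x)).congr_deriv (by ring)

lemma sqrt_two_pi : Real.sqrt (2*π) = Real.sqrt 2 * Real.sqrt π := Real.sqrt_mul (by norm_num) _

lemma sqrt_pi_pos : 0 < Real.sqrt π := Real.sqrt_pos.mpr pi_pos

lemma anti_hasDerivAt (y : ℝ) :
    HasDerivAt (fun y : ℝ => (1/4) * Real.exp (2*y^2) * erfc (Real.sqrt 2 * y) + y / Real.sqrt (2*π))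
      (y * erfc (Real.sqrt 2 * y) * Real.exp (2*y^2)) y := by
  have h1 : HasDerivAt (fun y : ℝ => Real.exp (2*y^2)) (Real.exp (2*y^2) * (4*y)) y := by
    have : HasDerivAt (fun y : ℝ => 2*y^2) (4*y) y := by
      have := (hasDerivAt_pow 2 y).const_mul (2:ℝ)
      norm_num at this
      exact this.congr_deriv (by ring)
    exact this.exp
  have h2 : HasDerivAt (fun y : ℝ => erfc (Real.sqrt 2 * y))
      (-(2 / Real.sqrt π * Real.exp (-(Real.sqrt 2 * y)^2)) * Real.sqrt 2) y :=
    (erfc_hasDerivAt (Real.sqrt 2 * y)).comp y (by simpa using (hasDerivAt_id y).const_mul (Real.sqrt 2))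
  have h3 := ((h1.mul h2).const_mul (1/4 : ℝ)).add
    ((hasDerivAt_id y).div_const (Real.sqrt (2*π)))
  have h3' : HasDerivAt (fun y : ℝ => (1/4) * Real.exp (2*y^2) * erfc (Real.sqrt 2 * y) + y / Real.sqrt (2*π))
      (1/4 * (Real.exp (2*y^2) * (4*y) * erfc (Real.sqrt 2 * y) +
        Real.exp (2*y^2) * (-(2 / Real.sqrt π * Real.exp (-(Real.sqrt 2 * y)^2)) * Real.sqrt 2)) +
        1 / Real.sqrt (2*π)) y := by
    exact h3.congr_of_eventuallyEq (Filter.Eventually.of_forall fun z => by simp only [Pi.add_apply, Pi.mul_apply, id]; ring)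
  convert h3' using 1
  have e1 : (Real.sqrt 2 * y)^2 = 2*y^2 := by
    rw [mul_pow, Real.sq_sqrt (by norm_num : (0:ℝ) ≤ 2)]
  rw [e1]
  have e2 : Real.exp (2*y^2) * Real.exp (-(2*y^2)) = 1 := by
    rw [← Real.exp_add]; simp
  have hπ := sqrt_pi_pos.ne'
  have h2 : (Real.sqrt 2) * (Real.sqrt 2) = 2 := Real.mul_self_sqrt (by norm_num)
  rw [sqrt_two_pi]
  field_simp
  linear_combination 2*Real.sqrt 2^2 * (by rw [mul_comm (y^2) 2]; exact e2 : Real.exp (y^2*2) * Real.exp (-(y^2*2)) = 1) + 2*h2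

lemma integrand_cont : Continuous (fun y : ℝ => |y| * erfc (Real.sqrt 2 * |y|) * Real.exp (2*y^2)) := by
  exact ((continuous_abs.mul (erfc_continuous.comp (continuous_const.mul continuous_abs))).mul
    (Real.continuous_exp.comp (by continuity)))

lemma integral_even_fn {f : ℝ → ℝ} (hf : ∀ x, f (-x) = f x)
    (hi : ∀ a b : ℝ, IntervalIntegrable f volume a b) (s : ℝ) :
    ∫ y in (-s)..s, f y = 2 * ∫ y in (0:ℝ)..s, f y := by
  have h1 : ∫ y in (-s)..(0:ℝ), f y = ∫ y in (0:ℝ)..s, f y := by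
    have h := intervalIntegral.integral_comp_neg (a := (0:ℝ)) (b := s) (f := f)
    simp only [hf, neg_zero] at h
    rw [← h]
  rw [← intervalIntegral.integral_add_adjacent_intervals (hi (-s) 0) (hi 0 s), h1]; ring

lemma intA (s : ℝ) :
    ∫ y in (0:ℝ)..s, y * erfc (Real.sqrt 2 * y) * Real.exp (2*y^2)
      = (1/4) * Real.exp (2*s^2) * erfc (Real.sqrt 2 * s) + s / Real.sqrt (2*π) - 1/4 := by
  have hcont : Continuous (fun y : ℝ => y * erfc (Real.sqrt 2 * y) * Real.exp (2*y^2)) :=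
    (continuous_id.mul (erfc_continuous.comp (by continuity))).mul
      (Real.continuous_exp.comp (by continuity))
  rw [intervalIntegral.integral_eq_sub_of_hasDerivAt (fun y _ => anti_hasDerivAt y)
    (hcont.intervalIntegrable 0 s)]
  simp [erfc_zero]

lemma inner_eval {s : ℝ} (hs : 0 ≤ s) :
    ∫ y in (-s)..s, |y| * erfc (Real.sqrt 2 * |y|) * Real.exp (2*y^2)
      = (1/2) * Real.exp (2*s^2) * erfc (Real.sqrt 2 * s) + 2 * s / Real.sqrt (2*π) - 1/2 := by
  rw [integral_even_fn (by intro x; simp [abs_neg, neg_sq]) (fun a b => integrand_cont.intervalIntegrable a b) s]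
  have : ∫ y in (0:ℝ)..s, |y| * erfc (Real.sqrt 2 * |y|) * Real.exp (2*y^2)
      = ∫ y in (0:ℝ)..s, y * erfc (Real.sqrt 2 * y) * Real.exp (2*y^2) := by
    apply intervalIntegral.integral_congr
    intro y hy
    rw [Set.uIcc_of_le hs] at hy
    simp only [abs_of_nonneg hy.1]
  rw [this, intA]; ring

lemma int_r_exp {R : ℝ} : ∫ r in (0:ℝ)..R, r * Real.exp (-(2*r^2))
    = (1 - Real.exp (-(2*R^2))) / 4 := by
  have key : ∀ r : ℝ, HasDerivAt (fun r : ℝ => -Real.exp (-(2*r^2)) / 4) (r * Real.exp (-(2*r^2))) r := by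
    intro r
    have : HasDerivAt (fun r : ℝ => -(2*r^2)) (-(4*r)) r := by
      have := (hasDerivAt_pow 2 r).const_mul (2:ℝ)
      norm_num at this
      exact this.neg.congr_deriv (by ring)
    have := (this.exp.neg).div_const 4
    exact this.congr_deriv (by ring)
  rw [intervalIntegral.integral_eq_sub_of_hasDerivAt (fun r _ => key r)
    (((continuous_id.mul (Real.continuous_exp.comp (by continuity)))).intervalIntegrable 0 R)]
  norm_num; ring

lemma discFubini {R : ℝ} (hR : 0 ≤ R) {g : ℝ × ℝ → ℝ} (hg : Continuous g) :
    ∫ p in {p : ℝ × ℝ | p.1^2 + p.2^2 ≤ R^2}, g p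
      = ∫ x in (-R)..R, ∫ y in (-(Real.sqrt (R^2 - x^2)))..(Real.sqrt (R^2 - x^2)), g (x, y) := by
  set D : Set (ℝ × ℝ) := {p : ℝ × ℝ | p.1^2 + p.2^2 ≤ R^2} with hD
  have hDmeas : MeasurableSet D := by
    apply measurableSet_le <;> fun_prop
  have hDsub : D ⊆ Set.Icc (-R) R ×ˢ Set.Icc (-R) R := by
    rintro ⟨x, y⟩ hp
    simp only [hD, Set.mem_setOf_eq] at hp
    have hx : x^2 ≤ R^2 := by nlinarith [sq_nonneg y]
    have hy : y^2 ≤ R^2 := by nlinarith [sq_nonneg x]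
    exact ⟨abs_le_of_sq_le_sq' hx hR, abs_le_of_sq_le_sq' hy hR⟩
  have hDcomp : IsCompact D := by
    apply IsCompact.of_isClosed_subset (isCompact_Icc.prod isCompact_Icc) ?_ hDsub
    exact isClosed_le (by fun_prop) continuous_const
  have hInt : IntegrableOn g D := hg.continuousOn.integrableOn_compact hDcomp
  rw [← integral_indicator hDmeas]
  have hIntInd : Integrable (D.indicator g) ((volume : Measure ℝ).prod volume) := by
    rw [← MeasureTheory.Measure.volume_eq_prod]
    exact (integrable_indicator_iff hDmeas).mpr hInt
  have : ∫ p, D.indicator g p = ∫ x, ∫ y, D.indicator g (x, y) := by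
    rw [MeasureTheory.Measure.volume_eq_prod, integral_prod _ hIntInd]
  rw [this]
  have inner : ∀ x : ℝ, (∫ y, D.indicator g (x, y))
      = ∫ y in (-(Real.sqrt (R^2 - x^2)))..(Real.sqrt (R^2 - x^2)), g (x, y) := by
    intro x
    have hind : ∀ y : ℝ, D.indicator g (x, y)
        = ({y : ℝ | x^2 + y^2 ≤ R^2}).indicator (fun y => g (x, y)) y := by
      intro y
      by_cases h : x^2 + y^2 ≤ R^2 <;> simp [Set.indicator, hD, h]
    simp_rw [hind]
    rw [integral_indicator (by apply measurableSet_le <;> fun_prop)]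
    by_cases hx : x^2 ≤ R^2
    · set s := Real.sqrt (R^2 - x^2) with hs
      have hs2 : s^2 = R^2 - x^2 := Real.sq_sqrt (by linarith)
      have hseq : {y : ℝ | x^2 + y^2 ≤ R^2} = Set.Icc (-s) s := by
        ext y
        simp only [Set.mem_setOf_eq, Set.mem_Icc]
        constructor
        · intro h
          exact abs_le_of_sq_le_sq' (by linarith [hs2]) (Real.sqrt_nonneg _)
        · rintro ⟨h1, h2⟩
          nlinarith [sq_le_sq' h1 h2]
      rw [hseq, integral_Icc_eq_integral_Ioc,
        ← intervalIntegral.integral_of_le (by linarith [Real.sqrt_nonneg (R^2-x^2)] : -s ≤ s)]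
    · have hseq : {y : ℝ | x^2 + y^2 ≤ R^2} = ∅ := by
        ext y; simp only [Set.mem_setOf_eq, Set.mem_empty_iff_false, iff_false]
        nlinarith [sq_nonneg y]
      have hs0 : Real.sqrt (R^2 - x^2) = 0 :=
        Real.sqrt_eq_zero_of_nonpos (by nlinarith)
      rw [hseq, hs0]
      simp
  simp_rw [inner]
  set F : ℝ → ℝ := fun x => ∫ y in (-(Real.sqrt (R^2 - x^2)))..(Real.sqrt (R^2 - x^2)), g (x, y) with hF
  have hsupp : ∀ x ∉ Set.Icc (-R) R, F x = 0 := by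
    intro x hx
    have hx2 : ¬ (x^2 ≤ R^2) := by
      intro h; exact hx (Set.mem_Icc.mpr (abs_le_of_sq_le_sq' h hR))
    have hs0 : Real.sqrt (R^2 - x^2) = 0 := Real.sqrt_eq_zero_of_nonpos (by nlinarith)
    simp [hF, hs0]
  rw [← setIntegral_eq_integral_of_forall_compl_eq_zero hsupp, integral_Icc_eq_integral_Ioc,
    ← intervalIntegral.integral_of_le (by linarith : -R ≤ R)]

lemma disc_gauss {R : ℝ} (hR : 0 ≤ R) :
    ∫ p in {p : ℝ × ℝ | p.1^2 + p.2^2 ≤ R^2}, Real.exp (-(2*(p.1^2+p.2^2)))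
      = π/2 * (1 - Real.exp (-(2*R^2))) := by
  set D : Set (ℝ × ℝ) := {p : ℝ × ℝ | p.1^2 + p.2^2 ≤ R^2} with hD
  have hDmeas : MeasurableSet D := by apply measurableSet_le <;> fun_prop
  set g : ℝ × ℝ → ℝ := fun p => Real.exp (-(2*(p.1^2+p.2^2))) with hg
  set ψ : ℝ → ℝ := fun r => ({u : ℝ | u^2 ≤ R^2}).indicator (fun u => u * Real.exp (-(2*u^2))) r with hψ
  have key : ∀ p : ℝ × ℝ, p.1 • (D.indicator g (polarCoord.symm p)) = ψ p.1 := by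
    rintro ⟨r, θ⟩
    have hnorm : (r * Real.cos θ)^2 + (r * Real.sin θ)^2 = r^2 := by
      rw [mul_pow, mul_pow, ← mul_add, Real.cos_sq_add_sin_sq, mul_one]
    simp only [polarCoord, OpenPartialHomeomorph.mk_coe_symm, PartialEquiv.coe_symm_mk, hD, hg, hψ,
      Set.indicator, Set.mem_setOf_eq, hnorm, smul_eq_mul]
    by_cases h : r^2 ≤ R^2 <;> simp [h] <;> ring
  have htarget : polarCoord.target = Set.Ioi (0:ℝ) ×ˢ Set.Ioo (-π) π := rfl
  have step1 : ∫ p, D.indicator g p = ∫ p in polarCoord.target, ψ p.1 := by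
    rw [← integral_comp_polarCoord_symm (D.indicator g)]
    exact setIntegral_congr_fun (htarget ▸ (measurableSet_Ioi.prod measurableSet_Ioo)) (fun p _ => key p)
  rw [← integral_indicator hDmeas, step1, htarget]
  have step2 : ∫ p in Set.Ioi (0:ℝ) ×ˢ Set.Ioo (-π) π, ψ p.1
      = (∫ r in Set.Ioi (0:ℝ), ψ r) * ∫ θ in Set.Ioo (-π) π, (1:ℝ) := by
    rw [MeasureTheory.Measure.volume_eq_prod, ← setIntegral_prod_mul ψ (fun _ => (1:ℝ))]
    simp
  rw [step2]
  have hmeasS : MeasurableSet {u : ℝ | u^2 ≤ R^2} := by apply measurableSet_le <;> fun_prop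
  have step3 : ∫ r in Set.Ioi (0:ℝ), ψ r = ∫ r in (0:ℝ)..R, r * Real.exp (-(2*r^2)) := by
    rw [hψ, integral_indicator hmeasS, Measure.restrict_restrict hmeasS]
    have hseteq : {u : ℝ | u^2 ≤ R^2} ∩ Set.Ioi 0 = Set.Ioc 0 R := by
      ext u
      simp only [Set.mem_inter_iff, Set.mem_setOf_eq, Set.mem_Ioi, Set.mem_Ioc]
      constructor
      · rintro ⟨h1, h2⟩; exact ⟨h2, le_of_sq_le_sq h1 hR⟩
      · rintro ⟨h1, h2⟩; exact ⟨sq_le_sq' (by linarith) h2, h1⟩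
    rw [hseteq, ← intervalIntegral.integral_of_le hR]
  rw [step3, int_r_exp]
  have : (volume (Set.Ioo (-π) π)).toReal = 2*π := by
    rw [Real.volume_Ioo]
    rw [ENNReal.toReal_ofReal (by linarith [pi_pos])]
    ring
  rw [setIntegral_const, Measure.real, this]
  simp only [smul_eq_mul, mul_one]
  ring

lemma int_sqrt {R : ℝ} (hR : 0 ≤ R) :
    ∫ x in (-R)..R, Real.sqrt (R^2 - x^2) = π * R^2 / 2 := by
  rcases eq_or_lt_of_le hR with h | h
  · simp [← h]
  · have key : ∀ x : ℝ, Real.sqrt (R^2 - x^2) = R * Real.sqrt (1 - (x/R)^2) := by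
      intro x
      rw [show R^2 - x^2 = R^2 * (1 - (x/R)^2) by field_simp, Real.sqrt_mul (sq_nonneg R),
        Real.sqrt_sq hR]
    simp_rw [key]
    rw [intervalIntegral.integral_const_mul]
    have := intervalIntegral.integral_comp_div (a := -R) (b := R)
      (fun u => Real.sqrt (1 - u^2)) (ne_of_gt h)
    rw [this, neg_div, div_self (ne_of_gt h), integral_sqrt_one_sub_sq, smul_eq_mul]
    ring

lemma gauss2_int (s : ℝ) : ∫ u in (0:ℝ)..s, Real.exp (-(2*u^2))
    = Real.sqrt π / (2 * Real.sqrt 2) * erf (Real.sqrt 2 * s) := by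
  rw [erf_sqrt_two]
  have h2 : (Real.sqrt 2 : ℝ) ≠ 0 := by positivity
  have hπ := sqrt_pi_pos.ne'
  field_simp

lemma inner_gauss {s : ℝ} (hs : 0 ≤ s) : ∫ y in (-s)..s, Real.exp (-(2*y^2))
    = Real.sqrt π / Real.sqrt 2 * erf (Real.sqrt 2 * s) := by
  have hi : ∀ a b : ℝ, IntervalIntegrable (fun y : ℝ => Real.exp (-(2*y^2))) volume a b := by
    intro a b
    apply Continuous.intervalIntegrable
    continuity
  rw [integral_even_fn (by intro x; simp) hi s, gauss2_int]
  field_simp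

lemma erf_int {R : ℝ} (hR : 0 ≤ R) :
    ∫ x in (-R)..R, Real.exp (-(2*x^2)) * erf (Real.sqrt 2 * Real.sqrt (R^2 - x^2))
      = Real.sqrt 2 * Real.sqrt π / 2 * (1 - Real.exp (-(2*R^2))) := by
  have hg : Continuous (fun p : ℝ × ℝ => Real.exp (-(2*(p.1^2+p.2^2)))) :=
    Real.continuous_exp.comp (by continuity)
  have h := (discFubini hR hg).symm.trans (disc_gauss hR)
  have hinner : ∀ x : ℝ, (∫ y in (-(Real.sqrt (R^2 - x^2)))..(Real.sqrt (R^2 - x^2)),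
      Real.exp (-(2*(x^2+y^2))))
      = Real.sqrt π / Real.sqrt 2 * (Real.exp (-(2*x^2)) * erf (Real.sqrt 2 * Real.sqrt (R^2 - x^2))) := by
    intro x
    have : ∀ y : ℝ, Real.exp (-(2*(x^2+y^2))) = Real.exp (-(2*x^2)) * Real.exp (-(2*y^2)) := by
      intro y; rw [← Real.exp_add]; ring_nf
    simp_rw [this]
    rw [intervalIntegral.integral_const_mul, inner_gauss (Real.sqrt_nonneg _)]
    ring
  simp_rw [hinner] at h
  rw [intervalIntegral.integral_const_mul] at h
  have hsπ : Real.sqrt π / Real.sqrt 2 ≠ 0 := by positivity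
  have hπ2 : (Real.sqrt π) * (Real.sqrt π) = π := Real.mul_self_sqrt pi_pos.le
  apply mul_left_cancel₀ hsπ
  rw [h]
  have hπ := sqrt_pi_pos.ne'
  have h2' : (Real.sqrt 2 : ℝ) ≠ 0 := by positivity
  field_simp
  linear_combination (-(1 - Real.exp (-(2*R^2)))) * hπ2

lemma erfc_int {R : ℝ} (hR : 0 ≤ R) :
    ∫ x in (-R)..R, Real.exp (-(2*x^2)) * erfc (Real.sqrt 2 * Real.sqrt (R^2 - x^2))
      = Real.sqrt π / Real.sqrt 2 * erf (Real.sqrt 2 * R)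
        - Real.sqrt 2 * Real.sqrt π / 2 * (1 - Real.exp (-(2*R^2))) := by
  have hcont1 : Continuous (fun x : ℝ => Real.exp (-(2*x^2))) :=
    Real.continuous_exp.comp (by continuity)
  have hcont2 : Continuous (fun x : ℝ => Real.exp (-(2*x^2)) * erf (Real.sqrt 2 * Real.sqrt (R^2 - x^2))) :=
    hcont1.mul (erf_continuous.comp (by continuity))
  have : ∀ x : ℝ, Real.exp (-(2*x^2)) * erfc (Real.sqrt 2 * Real.sqrt (R^2 - x^2))
      = Real.exp (-(2*x^2)) - Real.exp (-(2*x^2)) * erf (Real.sqrt 2 * Real.sqrt (R^2 - x^2)) := by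
    intro x; rw [erfc]; ring
  simp_rw [this]
  rw [intervalIntegral.integral_sub (hcont1.intervalIntegrable _ _) (hcont2.intervalIntegrable _ _),
    inner_gauss hR, erf_int hR]

theorem expected_number_complex_origin_GinOE (R : ℝ) (hR : 0 ≤ R) :
    Real.sqrt (2 / π) * ∫ p in {p : ℝ × ℝ | p.1 ^ 2 + p.2 ^ 2 ≤ R ^ 2},
        |p.2| * erfc (Real.sqrt 2 * |p.2|) * Real.exp (2 * p.2 ^ 2)
      = R ^ 2 - Real.sqrt (2 / π) * R + 1 / 2
        - (1 / 2) * Real.exp (2 * R ^ 2) * erfc (Real.sqrt 2 * R) := by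
  have hgcont : Continuous (fun p : ℝ × ℝ => |p.2| * erfc (Real.sqrt 2 * |p.2|) * Real.exp (2 * p.2 ^ 2)) := by
    have := integrand_cont
    exact this.comp continuous_snd
  rw [discFubini hR hgcont]
  have hinner : ∀ x : ℝ, x ∈ Set.uIcc (-R) R →
      (∫ y in (-(Real.sqrt (R^2 - x^2)))..(Real.sqrt (R^2 - x^2)),
        |y| * erfc (Real.sqrt 2 * |y|) * Real.exp (2 * y ^ 2))
      = (1/2) * Real.exp (2*R^2) * (Real.exp (-(2*x^2)) * erfc (Real.sqrt 2 * Real.sqrt (R^2 - x^2)))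
        + 2 / Real.sqrt (2*π) * Real.sqrt (R^2 - x^2) - 1/2 := by
    intro x hx
    rw [Set.uIcc_of_le (by linarith : -R ≤ R), Set.mem_Icc] at hx
    have hx2 : x^2 ≤ R^2 := sq_le_sq' hx.1 hx.2
    have hs2 : (Real.sqrt (R^2 - x^2))^2 = R^2 - x^2 := Real.sq_sqrt (by linarith)
    rw [inner_eval (Real.sqrt_nonneg _), hs2]
    have : Real.exp (2*(R^2 - x^2)) = Real.exp (2*R^2) * Real.exp (-(2*x^2)) := by
      rw [← Real.exp_add]; ring_nf
    rw [this]
    ring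
  rw [intervalIntegral.integral_congr hinner]
  have hcont1 : Continuous (fun x : ℝ => Real.exp (-(2*x^2)) * erfc (Real.sqrt 2 * Real.sqrt (R^2 - x^2))) :=
    (Real.continuous_exp.comp (by continuity)).mul (erfc_continuous.comp (by continuity))
  have hcont2 : Continuous (fun x : ℝ => Real.sqrt (R^2 - x^2)) := by continuity
  have split : ∫ x in (-R)..R,
      ((1/2) * Real.exp (2*R^2) * (Real.exp (-(2*x^2)) * erfc (Real.sqrt 2 * Real.sqrt (R^2 - x^2)))
        + 2 / Real.sqrt (2*π) * Real.sqrt (R^2 - x^2) - 1/2)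
      = (1/2) * Real.exp (2*R^2) * (∫ x in (-R)..R, Real.exp (-(2*x^2)) * erfc (Real.sqrt 2 * Real.sqrt (R^2 - x^2)))
        + 2 / Real.sqrt (2*π) * (∫ x in (-R)..R, Real.sqrt (R^2 - x^2))
        - (∫ x in (-R)..R, (1/2 : ℝ)) := by
    rw [← intervalIntegral.integral_const_mul, ← intervalIntegral.integral_const_mul,
      ← intervalIntegral.integral_add ((hcont1.intervalIntegrable _ _).const_mul _)
        ((hcont2.intervalIntegrable _ _).const_mul _),
      ← intervalIntegral.integral_sub (by exact ((continuous_const.mul hcont1).add (continuous_const.mul hcont2)).intervalIntegrable _ _)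
        (intervalIntegrable_const)]
  rw [split, erfc_int hR, int_sqrt hR, intervalIntegral.integral_const]
  have h2 : (Real.sqrt 2) * (Real.sqrt 2) = 2 := Real.mul_self_sqrt (by norm_num)
  have hπ2 : (Real.sqrt π) * (Real.sqrt π) = π := Real.mul_self_sqrt pi_pos.le
  have hs2π : Real.sqrt (2/π) = Real.sqrt 2 / Real.sqrt π :=
    Real.sqrt_div (by norm_num) π
  have hE : Real.exp (2*R^2) * Real.exp (-(2*R^2)) = 1 := by rw [← Real.exp_add]; simp
  have hπ := sqrt_pi_pos.ne'
  have h2' : (Real.sqrt 2 : ℝ) ≠ 0 := by positivity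
  rw [sqrt_two_pi, hs2π, smul_eq_mul]
  rw [mul_sub, mul_add]
  have mini1 : Real.sqrt 2 / Real.sqrt π * (2 / (Real.sqrt 2 * Real.sqrt π) * (π * R^2 / 2)) = R^2 := by
    field_simp
    linear_combination (-R^2) * hπ2
  have mini2 : Real.sqrt 2 / Real.sqrt π * ((1/2) * Real.exp (2*R^2) *
      (Real.sqrt π / Real.sqrt 2 * erf (Real.sqrt 2 * R)
        - Real.sqrt 2 * Real.sqrt π / 2 * (1 - Real.exp (-(2*R^2)))))
      = 1/2 - (1/2) * Real.exp (2*R^2) * (1 - erf (Real.sqrt 2 * R)) := by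
    field_simp
    linear_combination Real.sqrt 2^2 * hE + (1 - Real.exp (2*R^2)) * h2
  rw [mini1, mini2, erfc]
  ring
end
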